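/- arXiv:1901.02287 — 3 statements merged into one kernel-verified Lean document; each statement's English description precedes it below -/
import Mathlib

section
/- For every n ≥ 1 and every j < 2^n, the dominated set D_j = {k < 2^n : k ⪯ j} is a minimal puncturing bit pattern making encoder input bit j incapable: j ∈ U_p(D_j), and for every proper subset Q ⊊ D_j one has j ∉ U_p(Q). -/
/-- Binary domination: every binary digit of `i` is at most the corresponding digit of `j`. -/
def bdom (i j : ℕ) : Prop := ∀ t, i.testBit t = true → j.testBit t = true

instance (i j : ℕ) : Decidable (bdom i j) :=
  decidable_of_iff (i ||| j = j) (by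
    constructor
    · intro h t hi
      have h1 : (i ||| j).testBit t = j.testBit t := by rw [h]
      rw [Nat.testBit_or, hi, Bool.true_or] at h1
      exact h1.symm
    · intro h
      apply Nat.eq_of_testBit_eq
      intro t
      rw [Nat.testBit_or]
      cases hi : i.testBit t with
      | true => simp [h t hi]
      | false => simp)

/-- One step of zero-LLR propagation, computing the stage-`t` zero-LLR set from the
stage-`t+1` zero-LLR set `S`, for a polar code of length `2^n`. -/
def zstep (n t : ℕ) (S : Finset ℕ) : Finset ℕ :=
  (Finset.range (2 ^ n)).filter fun i =>
    if i.testBit t then i ∈ S ∧ i - 2 ^ t ∈ S else i ∈ S ∨ i + 2 ^ t ∈ S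

/-- Zero-LLR set at stage `t` for puncturing set `X`, for a polar code of length `2^n`:
`Zstage n X n = X` and `Zstage n X t = zstep n t (Zstage n X (t+1))` for `t < n`. -/
def Zstage (n : ℕ) (X : Finset ℕ) (t : ℕ) : Finset ℕ :=
  if _h : n ≤ t then X else zstep n t (Zstage n X (t + 1))
termination_by n - t
decreasing_by omega

/-- The incapable set resulting from puncturing set `X`. -/
def Up (n : ℕ) (X : Finset ℕ) : Finset ℕ := Zstage n X 0

lemma my_decomp (i t : ℕ) : ∃ q r, r < 2^(t+1) ∧ i = 2^(t+1) * q + r ∧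
    (i.testBit t = true ↔ 2^t ≤ r) := by
  have hd := Nat.div_add_mod i (2^(t+1))
  refine ⟨i / 2^(t+1), i % 2^(t+1), Nat.mod_lt _ (by positivity), hd.symm, ?_⟩
  rw [Nat.testBit_eq_decide_div_mod_eq]
  have h3 : i % 2^(t+1) / 2^t = i / 2^t % 2 := by
    rw [show (2:ℕ)^(t+1) = 2^t * 2 by ring, Nat.mod_mul_right_div_self]
  have h4 : i / 2^t % 2 < 2 := Nat.mod_lt _ (by norm_num)
  have h5 : 2^t ≤ i % 2^(t+1) ↔ 1 ≤ i % 2^(t+1) / 2^t :=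
    (Nat.one_le_div_iff (by positivity)).symm
  simp only [decide_eq_true_eq]
  omega

lemma testBit_padd {i t : ℕ} (h : i.testBit t = false) (s : ℕ) :
    (i + 2^t).testBit s = if s = t then true else i.testBit s := by
  obtain ⟨q, r, hr, rfl, hbit⟩ := my_decomp i t
  have hrt : r < 2^t := by
    rcases Nat.lt_or_ge r (2^t) with h' | h'
    · exact h'
    · rw [hbit.mpr h'] at h; cases h
  have hr2 : r + 2^t < 2^(t+1) := by rw [pow_succ]; omega
  have e1 : 2^(t+1) * q + r + 2^t = 2^(t+1) * q + (r + 2^t) := by ring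
  rw [e1, Nat.testBit_two_pow_mul_add q hr2, Nat.testBit_two_pow_mul_add q hr]
  by_cases hst : s = t
  · subst hst
    rw [if_pos rfl, if_pos (by omega), show r + 2^s = 2^s + r by ring,
      Nat.testBit_two_pow_add_eq, Nat.testBit_lt_two_pow hrt]
    rfl
  · rw [if_neg hst]
    rcases Nat.lt_or_ge s t with h' | h'
    · rw [if_pos (by omega), if_pos (by omega), show r + 2^t = 2^t + r by ring,
        Nat.testBit_two_pow_add_gt h']
    · rw [if_neg (by omega), if_neg (by omega)]

lemma testBit_psub {i t : ℕ} (h : i.testBit t = true) (s : ℕ) :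
    (i - 2^t).testBit s = if s = t then false else i.testBit s := by
  obtain ⟨q, r, hr, rfl, hbit⟩ := my_decomp i t
  have hrt : 2^t ≤ r := hbit.mp h
  have e1 : 2^(t+1) * q + r - 2^t = 2^(t+1) * q + (r - 2^t) := by omega
  have hr2 : r - 2^t < 2^t := by rw [pow_succ] at hr; omega
  rw [e1, Nat.testBit_two_pow_mul_add q (hr2.trans_le (Nat.pow_le_pow_right (by norm_num) (by omega))),
    Nat.testBit_two_pow_mul_add q hr]
  by_cases hst : s = t
  · subst hst
    rw [if_pos rfl, if_pos (by omega), Nat.testBit_lt_two_pow hr2]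
  · rw [if_neg hst]
    rcases Nat.lt_or_ge s t with h' | h'
    · rw [if_pos (by omega), if_pos (by omega)]
      conv_rhs => rw [show r = 2^t + (r - 2^t) by omega]
      rw [Nat.testBit_two_pow_add_gt h']
    · rw [if_neg (by omega), if_neg (by omega)]

lemma Zstage_of_le {n t : ℕ} (X : Finset ℕ) (h : n ≤ t) : Zstage n X t = X := by
  rw [Zstage, dif_pos h]

lemma Zstage_of_lt {n t : ℕ} (X : Finset ℕ) (h : t < n) :
    Zstage n X t = zstep n t (Zstage n X (t + 1)) := by
  rw [Zstage, dif_neg (by omega)]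

lemma mem_zstep {n t i : ℕ} {S : Finset ℕ} :
    i ∈ zstep n t S ↔ i < 2 ^ n ∧
      (if i.testBit t then i ∈ S ∧ i - 2 ^ t ∈ S else i ∈ S ∨ i + 2 ^ t ∈ S) := by
  simp [zstep, Finset.mem_filter, Finset.mem_range]

lemma bdom_lt {k j n : ℕ} (h : bdom k j) (hj : j < 2 ^ n) : k < 2 ^ n := by
  apply Nat.lt_pow_two_of_testBit
  intro s hs
  cases hk : k.testBit s with
  | false => rfl
  | true =>
    have h1 := h s hk
    have h2 := Nat.testBit_lt_two_pow (lt_of_lt_of_le hj (Nat.pow_le_pow_right (by norm_num) hs))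
    rw [h2] at h1; cases h1

/-- bdom is preserved by clearing a set bit. -/
lemma bdom_sub {i j t : ℕ} (h : bdom i j) (hit : i.testBit t = true) : bdom (i - 2^t) j := by
  intro s hs
  rw [testBit_psub hit s] at hs
  by_cases hst : s = t
  · rw [if_pos hst] at hs; cases hs
  · rw [if_neg hst] at hs; exact h s hs

def Dset (n j : ℕ) : Finset ℕ := (Finset.range (2 ^ n)).filter fun k => bdom k j

section Main
variable {n j : ℕ} (hj : j < 2 ^ n)

local notation "D" => Dset n j

include hj

lemma zsub {Q : Finset ℕ} (hQ : Q ⊆ D) :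
    ∀ d t, n = t + d → Zstage n Q t ⊆ D := by
  intro d
  induction d with
  | zero => intro t ht; rw [Zstage_of_le Q (by omega)]; exact hQ
  | succ d ih =>
    intro t ht i hi
    rw [Zstage_of_lt Q (by omega)] at hi
    obtain ⟨hir, hcond⟩ := mem_zstep.mp hi
    have ihsub := ih (t + 1) (by omega)
    cases hit : i.testBit t with
    | true =>
      rw [if_pos hit] at hcond
      exact ihsub hcond.1
    | false =>
      rw [if_neg (by simp [hit])] at hcond
      rcases hcond with h | h
      · exact ihsub h
      · have hD := ihsub h
        rw [Dset, Finset.mem_filter] at hD ⊢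
        refine ⟨Finset.mem_range.mpr hir, ?_⟩
        intro s hs
        apply hD.2 s
        rw [testBit_padd hit s, if_neg (by rintro rfl; rw [hit] at hs; cases hs)]
        exact hs

lemma zsup : ∀ d t, n = t + d → D ⊆ Zstage n D t := by
  intro d
  induction d with
  | zero => intro t ht; rw [Zstage_of_le _ (by omega)]
  | succ d ih =>
    intro t ht i hi
    rw [Zstage_of_lt _ (by omega)]
    have ihsup := ih (t + 1) (by omega)
    obtain ⟨hir, hbd⟩ := Finset.mem_filter.mp hi
    rw [Finset.mem_range] at hir
    apply mem_zstep.mpr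
    refine ⟨hir, ?_⟩
    cases hit : i.testBit t with
    | true =>
      rw [if_pos rfl]
      refine ⟨ihsup hi, ihsup ?_⟩
      rw [Dset, Finset.mem_filter, Finset.mem_range]
      exact ⟨Nat.lt_of_le_of_lt (Nat.sub_le i (2^t)) hir, bdom_sub hbd hit⟩
    | false =>
      rw [if_neg (by simp)]
      exact Or.inl (ihsup hi)

lemma claimC {Q : Finset ℕ} (hQ : Q ⊆ D) :
    ∀ d t, n = t + d → ∀ i ∈ Zstage n Q t,
      (∀ s, t ≤ s → i.testBit s = j.testBit s) →
      ∀ k, bdom k j → (∀ s, s < t → k.testBit s = i.testBit s) → k ∈ Q := by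
  intro d
  induction d with
  | zero =>
    intro t ht i hi hhigh k hkd hk
    rw [Zstage_of_le _ (by omega)] at hi
    have hiD := hQ hi
    rw [Dset, Finset.mem_filter, Finset.mem_range] at hiD
    have hkn : k < 2 ^ n := bdom_lt hkd hj
    have : k = i := by
      apply Nat.eq_of_testBit_eq
      intro s
      rcases Nat.lt_or_ge s n with hs | hs
      · exact hk s (by omega)
      · rw [Nat.testBit_lt_two_pow
            (lt_of_lt_of_le hkn (Nat.pow_le_pow_right (by norm_num) hs)),
          Nat.testBit_lt_two_pow
            (lt_of_lt_of_le hiD.1 (Nat.pow_le_pow_right (by norm_num) hs))]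
    rwa [this]
  | succ d ih =>
    intro t ht i hi hhigh k hkd hk
    rw [Zstage_of_lt _ (by omega)] at hi
    obtain ⟨hir, hcond⟩ := mem_zstep.mp hi
    have hit : i.testBit t = j.testBit t := hhigh t le_rfl
    cases hjt : j.testBit t with
    | true =>
      rw [hjt] at hit
      rw [if_pos hit] at hcond
      cases hkt : k.testBit t with
      | true =>
        apply ih (t + 1) (by omega) i hcond.1
          (fun s hs => hhigh s (by omega)) k hkd
        intro s hs
        rcases Nat.lt_or_ge s t with h' | h'
        · exact hk s h'
        · have : s = t := by omega
          rw [this, hkt, hit]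
      | false =>
        apply ih (t + 1) (by omega) (i - 2^t) hcond.2 ?_ k hkd ?_
        · intro s hs
          rw [testBit_psub hit s, if_neg (by omega)]
          exact hhigh s (by omega)
        · intro s hs
          rw [testBit_psub hit s]
          rcases Nat.lt_or_ge s t with h' | h'
          · rw [if_neg (by omega)]; exact hk s h'
          · have : s = t := by omega
            rw [this, if_pos rfl, hkt]
    | false =>
      rw [hjt] at hit
      rw [if_neg (by simp [hit])] at hcond
      have hcond' : i ∈ Zstage n Q (t + 1) := by
        rcases hcond with h | h
        · exact h
        · exfalso
          have hD := zsub hj hQ d (t + 1) (by omega) h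
          rw [Dset, Finset.mem_filter] at hD
          have := hD.2 t (by rw [testBit_padd hit t, if_pos rfl])
          rw [hjt] at this; cases this
      apply ih (t + 1) (by omega) i hcond'
        (fun s hs => hhigh s (by omega)) k hkd
      intro s hs
      rcases Nat.lt_or_ge s t with h' | h'
      · exact hk s h'
      · have hst : s = t := by omega
        subst hst
        rw [hit]
        cases hks : k.testBit s with
        | false => rfl
        | true => have := hkd s hks; rw [hjt] at this; cases this

end Main

/-- the dominated set `D_j = {k < 2^n : k ⪯ j}` is a minimal puncturing
bit pattern making encoder input bit `j` incapable. -/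
theorem dominated_set_minimal_pattern (n : ℕ) (hn : 1 ≤ n) (j : ℕ) (hj : j < 2 ^ n) :
    j ∈ Up n ((Finset.range (2 ^ n)).filter fun k => bdom k j) ∧
      ∀ Q ⊂ (Finset.range (2 ^ n)).filter (fun k => bdom k j), j ∉ Up n Q := by
  have hjD : j ∈ Dset n j := by
    rw [Dset, Finset.mem_filter, Finset.mem_range]
    exact ⟨hj, fun t h => h⟩
  have hDD : (Finset.range (2 ^ n)).filter (fun k => bdom k j) = Dset n j := rfl
  rw [hDD]
  constructor
  · exact zsup hj n 0 (by omega) hjD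
  · intro Q hQ hjQ
    obtain ⟨hQsub, hnsub⟩ := Finset.ssubset_def.mp hQ
    apply hnsub
    intro k hk
    rw [Dset, Finset.mem_filter] at hk
    exact claimC hj hQsub n 0 (by omega) j hjQ (fun s _ => rfl) k hk.2
      (fun s hs => absurd hs (by omega))
end

section
/- For every n ≥ 1 and every puncturing set X ⊆ {0,…,2^n−1} that is downward closed under binary domination (j ∈ X and i ⪯ j imply i ∈ X), the zero-LLR set is the same at every decoding stage: Z_t(X) = X for every t with 0 ≤ t ≤ n. -/
private lemma mod_lt_of_testBit_false {i t : ℕ} (h : i.testBit t = false) :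
    i % 2 ^ (t + 1) < 2 ^ t := by
  have h1 : i / 2 ^ t % 2 = 0 := by
    have := Nat.testBit_eq_decide_div_mod_eq (x := i) (i := t)
    rw [h] at this
    simpa using this.symm
  have h2 : i % (2 ^ t * 2) = i % 2 ^ t + 2 ^ t * (i / 2 ^ t % 2) := Nat.mod_mul
  have h3 : i % 2 ^ t < 2 ^ t := Nat.mod_lt _ (Nat.two_pow_pos t)
  have : (2 : ℕ) ^ (t + 1) = 2 ^ t * 2 := by ring
  rw [this, h2, h1]
  omega

private lemma add_pow_eq_or {i t : ℕ} (h : i.testBit t = false) :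
    i + 2 ^ t = i ||| 2 ^ t := by
  have hr : i % 2 ^ (t + 1) < 2 ^ t := mod_lt_of_testBit_false h
  set q := i / 2 ^ (t + 1) with hq
  set r := i % 2 ^ (t + 1) with hrdef
  have hi : i = 2 ^ (t + 1) * q + r := by
    rw [hq, hrdef]; exact (Nat.div_add_mod i (2 ^ (t + 1))).symm
  have h1 : 2 ^ (t + 1) * q + r = 2 ^ (t + 1) * q ||| r :=
    Nat.two_pow_add_eq_or_of_lt (by calc r < 2 ^ t := hr
      _ ≤ 2 ^ (t + 1) := Nat.pow_le_pow_right (by norm_num) (by omega)) q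
  have h2 : 2 ^ (t + 1) * q + (r + 2 ^ t) = 2 ^ (t + 1) * q ||| (r + 2 ^ t) :=
    Nat.two_pow_add_eq_or_of_lt (by
      have : (2 : ℕ) ^ (t + 1) = 2 ^ t * 2 := by ring
      omega) q
  have h3 : r + 2 ^ t = r ||| 2 ^ t := by
    have := Nat.two_pow_add_eq_or_of_lt (b := r) (i := t) hr 1
    simpa [Nat.mul_one, Nat.add_comm, Nat.or_comm] using this
  calc i + 2 ^ t = 2 ^ (t + 1) * q + (r + 2 ^ t) := by omega
    _ = 2 ^ (t + 1) * q ||| (r + 2 ^ t) := h2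
    _ = 2 ^ (t + 1) * q ||| (r ||| 2 ^ t) := by rw [h3]
    _ = (2 ^ (t + 1) * q ||| r) ||| 2 ^ t := by rw [Nat.or_assoc]
    _ = i ||| 2 ^ t := by rw [← h1, ← hi]

private lemma bdom_self_add {i t : ℕ} (h : i.testBit t = false) :
    bdom i (i + 2 ^ t) := by
  intro s hs
  rw [add_pow_eq_or h, Nat.testBit_or, hs, Bool.true_or]

private lemma testBit_sub_pow_false {i t : ℕ} (h : i.testBit t = true) :
    (i - 2 ^ t).testBit t = false := by
  have hge : 2 ^ t ≤ i := Nat.ge_two_pow_of_testBit h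
  have h1 : i / 2 ^ t % 2 = 1 := by
    have := Nat.testBit_eq_decide_div_mod_eq (x := i) (i := t)
    rw [h] at this
    have := of_decide_eq_true this.symm
    exact this
  have hpt : 0 < 2 ^ t := Nat.two_pow_pos t
  have h2 : i % (2 ^ t * 2) = i % 2 ^ t + 2 ^ t * (i / 2 ^ t % 2) := Nat.mod_mul
  have h3 : i % 2 ^ t < 2 ^ t := Nat.mod_lt _ hpt
  -- i - 2^t = 2^(t+1) * (i / 2^(t+1)) + b with b < 2^t
  have hpow : (2 : ℕ) ^ (t + 1) = 2 ^ t * 2 := by ring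
  set q := i / 2 ^ (t + 1) with hq
  set r := i % 2 ^ (t + 1) with hrdef
  have hi : i = 2 ^ (t + 1) * q + r := by
    rw [hq, hrdef]; exact (Nat.div_add_mod i (2 ^ (t + 1))).symm
  have hr1 : 2 ^ t ≤ r := by rw [hrdef, hpow, h2, h1]; omega
  have hr2 : r < 2 ^ (t + 1) := by
    rw [hrdef]; exact Nat.mod_lt _ (Nat.two_pow_pos _)
  have hsub : i - 2 ^ t = 2 ^ (t + 1) * q + (r - 2 ^ t) := by omega

  rw [hsub]
  have := Nat.testBit_two_pow_mul_add q (b := r - 2 ^ t) (i := t + 1)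
    (by omega) t
  rw [this]
  simp only [Nat.lt_succ_self, if_pos]
  exact Nat.testBit_lt_two_pow (by rw [hpow] at hr2; omega)

private lemma bdom_sub_self {i t : ℕ} (h : i.testBit t = true) :
    bdom (i - 2 ^ t) i := by
  have hge : 2 ^ t ≤ i := Nat.ge_two_pow_of_testBit h
  have hf : (i - 2 ^ t).testBit t = false := testBit_sub_pow_false h
  intro s hs
  have : i = (i - 2 ^ t) + 2 ^ t := by omega
  rw [this, add_pow_eq_or hf, Nat.testBit_or, hs, Bool.true_or]

private lemma zstep_eq_self (n t : ℕ) (X : Finset ℕ) (hX : X ⊆ Finset.range (2 ^ n))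
    (hdc : ∀ j ∈ X, ∀ i, bdom i j → i ∈ X) : zstep n t X = X := by
  ext i
  simp only [zstep, Finset.mem_filter, Finset.mem_range]
  cases h : i.testBit t with
  | true =>
    simp only [if_pos]
    constructor
    · rintro ⟨_, hi, _⟩; exact hi
    · intro hi
      refine ⟨Finset.mem_range.mp (hX hi), hi, hdc i hi _ (bdom_sub_self h)⟩
  | false =>
    simp only [Bool.false_eq_true, if_neg, if_false]
    constructor
    · rintro ⟨_, hi | hi⟩
      · exact hi
      · exact hdc _ hi i (bdom_self_add h)
    · intro hi
      exact ⟨Finset.mem_range.mp (hX hi), Or.inl hi⟩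

/-- for a downward-closed puncturing set, the zero-LLR set is the same
at every decoding stage `t ≤ n`. -/
theorem downward_closed_stage_invariant (n : ℕ) (hn : 1 ≤ n)
    (X : Finset ℕ) (hX : X ⊆ Finset.range (2 ^ n))
    (hdc : ∀ j ∈ X, ∀ i, bdom i j → i ∈ X)
    (t : ℕ) (ht : t ≤ n) :
    Zstage n X t = X := by
  rw [Zstage]
  by_cases h : n ≤ t
  · rw [dif_pos h]
  · rw [dif_neg h,
      downward_closed_stage_invariant n hn X hX hdc (t + 1) (by omega)]
    exact zstep_eq_self n t X hX hdc
termination_by n - t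
decreasing_by omega
end

section
/- For every n ≥ 0 and every shortening set U ⊆ {0,…,2^n−1}, the fixed bit pattern X_s(U) is upward closed under binary domination: if j ∈ X_s(U) then G_j = {k < 2^n : j ⪯ k} ⊆ X_s(U). -/
/-- Polar encoder `u ↦ u · F₂^{⊗n}` over GF(2), with `F₂ = [[1,0],[1,1]]`:
`enc 0 u = u`, and `enc (n+1) u` is the concatenation of `enc n (u_L + u_H)`
(on indices `< 2^n`) followed by `enc n u_H` (on indices `2^n, …, 2^(n+1)-1`). -/
def enc : ℕ → (ℕ → ZMod 2) → (ℕ → ZMod 2)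
  | 0, u => u
  | n + 1, u => fun j =>
      if j < 2 ^ n then enc n (fun i => u i + u (i + 2 ^ n)) j
      else enc n (fun i => u (i + 2 ^ n)) (j - 2 ^ n)


lemma bdom_add_pow {n a b : ℕ} (ha : a < 2 ^ n) (hb : b < 2 ^ n) :
    bdom (a + 2 ^ n) (b + 2 ^ n) ↔ bdom a b := by
  constructor
  · intro h t hat
    have htn : t < n := by
      by_contra hge
      exact absurd (Nat.testBit_eq_false_of_lt (lt_of_lt_of_le ha
        (Nat.pow_le_pow_right (by norm_num) (le_of_not_gt hge)))) (by simp [hat])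
    have := h t (by rwa [Nat.add_comm, Nat.testBit_two_pow_add_gt htn])
    rwa [Nat.add_comm, Nat.testBit_two_pow_add_gt htn] at this
  · intro h t hat
    rcases lt_trichotomy t n with htn | rfl | htn
    · rw [Nat.add_comm, Nat.testBit_two_pow_add_gt htn] at hat ⊢
      exact h t hat
    · rw [Nat.add_comm, Nat.testBit_two_pow_add_eq, Nat.testBit_eq_false_of_lt hb]
      rfl
    · exfalso
      have : a + 2 ^ n < 2 ^ t :=
        lt_of_lt_of_le (show a + 2 ^ n < 2 ^ n + 2 ^ n by omega) (by
          calc 2 ^ n + 2 ^ n = 2 ^ (n+1) := by ring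
          _ ≤ 2 ^ t := Nat.pow_le_pow_right (by norm_num) htn)
      exact absurd (Nat.testBit_eq_false_of_lt this) (by simp [hat])

lemma bdom_low_high {n a b : ℕ} (ha : a < 2 ^ n) (hb : b < 2 ^ n) :
    bdom a (b + 2 ^ n) ↔ bdom a b := by
  constructor
  · intro h t hat
    have htn : t < n := by
      by_contra hge
      exact absurd (Nat.testBit_eq_false_of_lt (lt_of_lt_of_le ha
        (Nat.pow_le_pow_right (by norm_num) (le_of_not_gt hge)))) (by simp [hat])
    have := h t hat
    rwa [Nat.add_comm, Nat.testBit_two_pow_add_gt htn] at this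
  · intro h t hat
    have htn : t < n := by
      by_contra hge
      exact absurd (Nat.testBit_eq_false_of_lt (lt_of_lt_of_le ha
        (Nat.pow_le_pow_right (by norm_num) (le_of_not_gt hge)))) (by simp [hat])
    rw [Nat.add_comm, Nat.testBit_two_pow_add_gt htn]
    exact h t hat

lemma not_bdom_high_low {n a b : ℕ} (ha : a < 2 ^ n) (hb : b < 2 ^ n) :
    ¬ bdom (a + 2 ^ n) b := by
  intro h
  have hat : (a + 2 ^ n).testBit n = true := by
    rw [Nat.add_comm, Nat.testBit_two_pow_add_eq, Nat.testBit_eq_false_of_lt ha]; rfl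
  exact absurd (h n hat) (by simp [Nat.testBit_eq_false_of_lt hb])

lemma enc_eq_sum : ∀ (n : ℕ) (u : ℕ → ZMod 2) (j : ℕ), j < 2 ^ n →
    enc n u j = ∑ k ∈ Finset.range (2 ^ n), if bdom j k then u k else 0 := by
  intro n
  induction n with
  | zero =>
    intro u j hj
    interval_cases j
    simp only [enc]
    simp only [pow_zero, Finset.sum_range_one]
    rw [if_pos]
    intro t ht
    simp at ht
  | succ n ih =>
    intro u j hj
    have hsplit : (2 : ℕ) ^ (n + 1) = 2 ^ n + 2 ^ n := by ring
    rw [hsplit, Finset.sum_range_add]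
    simp only [enc]
    by_cases h : j < 2 ^ n
    · rw [if_pos h, ih _ _ h, ← Finset.sum_add_distrib]
      apply Finset.sum_congr rfl
      intro k hk
      rw [Finset.mem_range] at hk
      rw [Nat.add_comm (2 ^ n) k]
      simp only [bdom_low_high h hk]
      split_ifs <;> simp
    · rw [if_neg h]
      obtain ⟨j', rfl⟩ : ∃ j', j = j' + 2 ^ n := ⟨j - 2 ^ n, by omega⟩
      have hj' : j' < 2 ^ n := by omega
      rw [Nat.add_sub_cancel, ih _ _ hj']
      have h1 : ∑ k ∈ Finset.range (2 ^ n), (if bdom (j' + 2 ^ n) k then u k else 0) = 0 := by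
        apply Finset.sum_eq_zero
        intro k hk
        rw [Finset.mem_range] at hk
        rw [if_neg (not_bdom_high_low hj' hk)]
      rw [h1, zero_add]
      apply Finset.sum_congr rfl
      intro k hk
      rw [Finset.mem_range] at hk
      rw [Nat.add_comm (2 ^ n) k]
      simp only [bdom_add_pow hj' hk]

/-- The fixed bit pattern at the encoder output resulting from shortening the
encoder input bits with indices in `U`. -/
def Xs (n : ℕ) (U : Set ℕ) : Set ℕ :=
  {j | j < 2 ^ n ∧ ∀ u : ℕ → ZMod 2, (∀ i ∈ U, u i = 0) → enc n u j = 0}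

/-- the fixed bit pattern is upward closed under binary domination. -/
theorem fixed_upward_closed (n : ℕ) (U : Set ℕ) (hU : ∀ i ∈ U, i < 2 ^ n)
    (j : ℕ) (hj : j ∈ Xs n U) (k : ℕ) (hk : k < 2 ^ n) (hjk : bdom j k) :
    k ∈ Xs n U := by
  classical
  obtain ⟨hjlt, hjfix⟩ := hj
  have hsub : ∀ m, m < 2 ^ n → bdom j m → m ∈ U := by
    intro m hm hbm
    by_contra hmU
    have h0 := hjfix (fun i => if i = m then 1 else 0) (by
      intro i hi
      simp only [if_neg (fun h : i = m => hmU (h ▸ hi))])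
    rw [enc_eq_sum n _ j hjlt] at h0
    rw [Finset.sum_eq_single m] at h0
    · rw [if_pos hbm, if_pos rfl] at h0
      exact one_ne_zero h0
    · intro b _ hbm'
      simp [hbm']
    · intro habs
      exact absurd (Finset.mem_range.mpr hm) habs
  refine ⟨hk, fun u hu => ?_⟩
  rw [enc_eq_sum n u k hk]
  apply Finset.sum_eq_zero
  intro m hm
  rw [Finset.mem_range] at hm
  by_cases hbm : bdom k m
  · rw [if_pos hbm]
    exact hu m (hsub m hm (fun t ht => hbm t (hjk t ht)))
  · rw [if_neg hbm]
end
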